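/- Let (Ω, 𝓕, P) be a probability space and let X, M : Ω → ℝ be random variables with X > 0 and M > 0 almost surely. Let p < 0 and q = p/(p-1), so that 0 < q < 1. If E[X·M] ≤ 1, then (E[M^q])^{1-p} ≤ E[X^p], where the expectations are taken as values in [0, ∞] (equivalently, (1/p)E[X^p] ≤ (1/p)(E[M^q])^{1-p} since p < 0). -/

import Mathlib

open MeasureTheory

/-- Duality bound (Lemma A.1, case `p < 0`): if `E[X·M] ≤ 1` then
`(E[M^q])^(1-p) ≤ E[X^p]` where `q = p/(p-1) ∈ (0,1)`. -/
theorem duality_bound_neg_p {Ω : Type*} [MeasurableSpace Ω] (P : Measure Ω)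
    [IsProbabilityMeasure P] (X M : Ω → ℝ) (hXm : Measurable X) (hMm : Measurable M)
    (hX : ∀ᵐ ω ∂P, 0 < X ω) (hM : ∀ᵐ ω ∂P, 0 < M ω)
    (p q : ℝ) (hp : p < 0) (hq : q = p / (p - 1))
    (h1 : ∫⁻ ω, ENNReal.ofReal (X ω * M ω) ∂P ≤ 1) :
    (∫⁻ ω, ENNReal.ofReal (M ω ^ q) ∂P) ^ (1 - p)
      ≤ ∫⁻ ω, ENNReal.ofReal (X ω ^ p) ∂P := by
  have hp1 : p - 1 < 0 := by linarith
  have hq0 : 0 < q := by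
    rw [hq]; exact div_pos_of_neg_of_neg hp hp1
  have hqe : q * (p - 1) = p := by
    rw [hq]; exact div_mul_cancel₀ _ hp1.ne
  have hq1 : q < 1 := by nlinarith
  have h1q : 0 < 1 - q := by linarith
  have hpe : -q / (1 - q) = p := by
    field_simp; nlinarith
  have hqp1 : (1 - q) * (1 - p) = 1 := by nlinarith
  -- conjugate exponents 1/q and 1/(1-q)
  have hconj : (1/q).HolderConjugate (1/(1-q)) := by
    constructor
    · rw [one_div, one_div, inv_inv, inv_inv, inv_one]; ring
    · exact one_div_pos.mpr hq0
    · exact one_div_pos.mpr h1q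
  set F : Ω → ENNReal := fun ω => ENNReal.ofReal (X ω * M ω) with hF
  set G : Ω → ENNReal := fun ω => ENNReal.ofReal (X ω) with hG
  have hFm : AEMeasurable (fun ω => (F ω) ^ q) P :=
    ((hXm.mul hMm).ennreal_ofReal.pow measurable_const).aemeasurable
  have hGm : AEMeasurable (fun ω => (G ω) ^ (-q)) P :=
    (hXm.ennreal_ofReal.pow measurable_const).aemeasurable
  -- pointwise identity a.e.
  have hae : ∀ᵐ ω ∂P, ENNReal.ofReal (M ω ^ q) = (F ω) ^ q * (G ω) ^ (-q) := by
    filter_upwards [hX, hM] with ω hx hm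
    have hxm : 0 < X ω * M ω := mul_pos hx hm
    simp only [hF, hG]
    rw [ENNReal.ofReal_rpow_of_pos hxm, ENNReal.ofReal_rpow_of_pos hx,
      ← ENNReal.ofReal_mul (by positivity)]
    congr 1
    rw [Real.mul_rpow hx.le hm.le, mul_comm (X ω ^ q), mul_assoc,
      ← Real.rpow_add hx, add_neg_cancel, Real.rpow_zero, mul_one]
  have hint : ∫⁻ ω, ENNReal.ofReal (M ω ^ q) ∂P
      = ∫⁻ ω, (F ω) ^ q * (G ω) ^ (-q) ∂P := lintegral_congr_ae hae
  have hholder := ENNReal.lintegral_mul_le_Lp_mul_Lq P hconj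
    (f := fun ω => (F ω) ^ q) (g := fun ω => (G ω) ^ (-q)) hFm hGm
  simp only [Pi.mul_apply] at hholder
  have e1 : ∀ ω, ((F ω) ^ q) ^ (1/q) = F ω := by
    intro ω
    rw [← ENNReal.rpow_mul, mul_one_div, div_self hq0.ne', ENNReal.rpow_one]
  have e2 : ∀ ω, ((G ω) ^ (-q)) ^ (1/(1-q)) = (G ω) ^ p := by
    intro ω
    rw [← ENNReal.rpow_mul, neg_mul, mul_one_div, ← neg_div, hpe]
  simp only [e1, e2] at hholder
  have hGp : ∫⁻ ω, (G ω) ^ p ∂P = ∫⁻ ω, ENNReal.ofReal (X ω ^ p) ∂P := by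
    refine lintegral_congr_ae ?_
    filter_upwards [hX] with ω hx
    rw [hG, ENNReal.ofReal_rpow_of_pos hx]
  rw [hGp] at hholder
  -- one_div (1-q) and one_div q in exponents
  have hA : (∫⁻ ω, F ω ∂P) ^ (1/(1/q)) ≤ 1 := by
    apply ENNReal.rpow_le_one h1
    positivity
  have hmain : ∫⁻ ω, ENNReal.ofReal (M ω ^ q) ∂P
      ≤ (∫⁻ ω, ENNReal.ofReal (X ω ^ p) ∂P) ^ (1/(1/(1-q))) := by
    rw [hint]
    calc ∫⁻ ω, (F ω) ^ q * (G ω) ^ (-q) ∂P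
        ≤ (∫⁻ ω, F ω ∂P) ^ (1/(1/q)) *
          (∫⁻ ω, ENNReal.ofReal (X ω ^ p) ∂P) ^ (1/(1/(1-q))) := hholder
      _ ≤ 1 * (∫⁻ ω, ENNReal.ofReal (X ω ^ p) ∂P) ^ (1/(1/(1-q))) :=
          mul_le_mul_left hA _
      _ = _ := one_mul _
  calc (∫⁻ ω, ENNReal.ofReal (M ω ^ q) ∂P) ^ (1 - p)
      ≤ ((∫⁻ ω, ENNReal.ofReal (X ω ^ p) ∂P) ^ (1/(1/(1-q)))) ^ (1 - p) :=
        ENNReal.rpow_le_rpow hmain (by linarith)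
    _ = ∫⁻ ω, ENNReal.ofReal (X ω ^ p) ∂P := by
        rw [← ENNReal.rpow_mul, one_div_one_div, hqp1, ENNReal.rpow_one]
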